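/- Let p be the standard basis of discrete analytic polynomials on Λ₊ and Z a primitive operator, and let f : Λ₊ → ℂ be discrete analytic on Λ₊. Then for every N ∈ ℕ and every z ∈ Λ₊: f(z) = Σ_{n=0}^{N−1} (δ_xⁿ f)(0) · p n (z) + (Z^N (δ_x^N f))(z). Consequently, the pointwise expansion f(z) = Σ_{n=0}^{∞} (δ_xⁿ f)(0) · p n (z) holds (as a convergent series) for every z ∈ Λ₊ if and only if (Z^N (δ_x^N f))(z) → 0 as N → ∞ for every z ∈ Λ₊. -/

import Mathlib

open Complex

noncomputable section

/-- The Gaussian integer lattice Λ = ℤ + iℤ. -/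
abbrev GI := GaussianInt

/-- The lattice element i. -/
def Ii : GI := ⟨0, 1⟩

/-- The right half-lattice Λ₊ = {z ∈ Λ : Re z ≥ 0}. -/
def Lp := {z : GI // 0 ≤ z.re}

/-- The point 0 of Λ₊. -/
def pt0 : Lp := ⟨0, le_refl 0⟩

/-- The shift z ↦ z + 1 on Λ₊. -/
def shx (z : Lp) : Lp := ⟨z.1 + 1, by have := z.2; simp [Zsqrtd.re_add]; omega⟩

/-- The shift z ↦ z + i on Λ₊. -/
def shy (z : Lp) : Lp := ⟨z.1 + Ii, by have := z.2; simp [Zsqrtd.re_add, Ii]; omega⟩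

/-- α₊ = (1+i)/2. -/
def ap : ℂ := (1 + I) / 2

/-- α₋ = (1−i)/2. -/
def am : ℂ := (1 - I) / 2

/-- The difference operator δ_x on functions on Λ₊. -/
def dxp (f : Lp → ℂ) : Lp → ℂ := fun z => f (shx z) - f z

/-- The difference operator δ_y on functions on Λ₊. -/
def dyp (f : Lp → ℂ) : Lp → ℂ := fun z => f (shy z) - f z

/-- Discrete analyticity on the right half-lattice Λ₊. -/
def DAp (f : Lp → ℂ) : Prop :=
  ∀ z : Lp, (f (shx (shy z)) - f z) / (1 + I) = (f (shx z) - f (shy z)) / (1 - I)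

/-- The defining property of the standard basis of discrete analytic polynomials
on Λ₊. -/
def IsStdBasisP (p : ℕ → Lp → ℂ) : Prop :=
  (∀ n, DAp (p n)) ∧ (∀ z : Lp, p 0 z = 1) ∧ (∀ n, p (n + 1) pt0 = 0) ∧
    (∀ n, dxp (p (n + 1)) = p n)

/-- `Z` is a primitive operator: to each discrete analytic g on Λ₊ it assigns the
(unique) discrete analytic function Zg with (Zg)(0) = 0 and δ_x(Zg) = g. -/
def IsPrimitiveOp (Z : (Lp → ℂ) → (Lp → ℂ)) : Prop :=
  ∀ g, DAp g → DAp (Z g) ∧ Z g pt0 = 0 ∧ dxp (Z g) = g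

/- ### Auxiliary lemmas -/

lemma shx_shy_comm (z : Lp) : shx (shy z) = shy (shx z) := by
  apply Subtype.ext
  simp only [shx, shy]
  ring

lemma dap_dxp {f : Lp → ℂ} (hf : DAp f) : DAp (dxp f) := by
  intro z
  have h1 := hf z
  have h2 := hf (shx z)
  rw [← shx_shy_comm] at h2
  simp only [dxp]
  linear_combination h2 - h1

lemma one_add_I_ne : (1 + I : ℂ) ≠ 0 := by
  intro h
  simpa using congrArg Complex.im h

lemma one_sub_I_ne : (1 - I : ℂ) ≠ 0 := by
  intro h
  simpa using congrArg Complex.im h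

/-- Uniqueness: a discrete analytic function on Λ₊ vanishing at 0 with zero
x-difference vanishes identically. -/
lemma dap_unique {h : Lp → ℂ} (hh : DAp h) (h0 : h pt0 = 0) (hd : dxp h = 0) :
    ∀ z, h z = 0 := by
  have hx : ∀ z, h (shx z) = h z := by
    intro z
    have := congrFun hd z
    simp only [dxp, Pi.zero_apply] at this
    exact sub_eq_zero.mp this
  have hy : ∀ z, h (shy z) = h z := by
    intro z
    have h1 := hh z
    rw [hx (shy z), hx z, div_eq_div_iff one_add_I_ne one_sub_I_ne] at h1
    linear_combination h1 / 2
  have key : ∀ (b a : ℤ) (ha : (0 : ℤ) ≤ a),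
      h ⟨⟨a, b⟩, ha⟩ = h ⟨⟨a, 0⟩, ha⟩ := by
    intro b
    induction b using Int.induction_on with
    | zero => intro a ha; rfl
    | succ k ih =>
      intro a ha
      have e : (⟨⟨a, (k : ℤ) + 1⟩, ha⟩ : Lp) = shy ⟨⟨a, k⟩, ha⟩ := by
        apply Subtype.ext
        simp [shy, Ii]
      rw [e]
      exact (hy _).trans (ih a ha)
    | pred k ih =>
      intro a ha
      have e : (⟨⟨a, -(k : ℤ)⟩, ha⟩ : Lp) = shy ⟨⟨a, -(k : ℤ) - 1⟩, ha⟩ := by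
        apply Subtype.ext
        simp [shy, Ii]
      have := ih a ha
      rw [e] at this
      exact (hy _).symm.trans this
  have key2 : ∀ n : ℕ, h ⟨⟨(n : ℤ), 0⟩, Int.ofNat_nonneg n⟩ = 0 := by
    intro n
    induction n with
    | zero =>
      show h ⟨⟨(0 : ℤ), 0⟩, Int.ofNat_nonneg 0⟩ = 0
      have e : (⟨⟨(0 : ℤ), 0⟩, Int.ofNat_nonneg 0⟩ : Lp) = pt0 := by
        apply Subtype.ext
        rfl
      rw [e]; exact h0
    | succ n ih =>
      have e : (⟨⟨((n : ℤ) + 1 : ℤ), 0⟩, by positivity⟩ : Lp)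
          = shx ⟨⟨(n : ℤ), 0⟩, Int.ofNat_nonneg n⟩ := by
        apply Subtype.ext
        rfl
      calc h ⟨⟨((n + 1 : ℕ) : ℤ), 0⟩, Int.ofNat_nonneg (n + 1)⟩
          = h (shx ⟨⟨(n : ℤ), 0⟩, Int.ofNat_nonneg n⟩) := by
            rw [← e]; push_cast; rfl
        _ = 0 := by exact (hx _).trans ih
  rintro ⟨⟨a, b⟩, ha⟩
  rw [key b a ha]
  obtain ⟨n, rfl⟩ := Int.eq_ofNat_of_zero_le ha
  exact key2 n

/-- for discrete analytic f on Λ₊ the identity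
`f(z) = Σ_{n<N} (δ_xⁿ f)(0) p n (z) + (Z^N δ_x^N f)(z)` holds for all N and z, and
the pointwise power series expansion `f(z) = Σ_{n} (δ_xⁿ f)(0) p n (z)` holds for
every z ∈ Λ₊ iff `(Z^N δ_x^N f)(z) → 0` for every z ∈ Λ₊. -/
theorem stmt11 (p : ℕ → Lp → ℂ) (hp : IsStdBasisP p)
    (Z : (Lp → ℂ) → (Lp → ℂ)) (hZ : IsPrimitiveOp Z)
    (f : Lp → ℂ) (hf : DAp f) :
    (∀ (N : ℕ) (z : Lp),
      f z = ∑ n ∈ Finset.range N, (dxp^[n] f) pt0 * p n z + (Z^[N] (dxp^[N] f)) z) ∧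
    ((∀ z : Lp,
        Filter.Tendsto (fun N => ∑ n ∈ Finset.range N, (dxp^[n] f) pt0 * p n z)
          Filter.atTop (nhds (f z))) ↔
      (∀ z : Lp,
        Filter.Tendsto (fun N => (Z^[N] (dxp^[N] f)) z) Filter.atTop (nhds 0))) := by
  obtain ⟨hpa, hp0, hpz, hpd⟩ := hp
  -- DAp is closed under iterates of dxp and of Z
  have dapdx : ∀ (N : ℕ) (g : Lp → ℂ), DAp g → DAp (dxp^[N] g) := by
    intro N
    induction N with
    | zero => intro g hg; exact hg
    | succ N ih =>
      intro g hg
      rw [Function.iterate_succ_apply']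
      exact dap_dxp (ih g hg)
  have dapZ : ∀ (N : ℕ) (g : Lp → ℂ), DAp g → DAp (Z^[N] g) := by
    intro N
    induction N with
    | zero => intro g hg; exact hg
    | succ N ih =>
      intro g hg
      rw [Function.iterate_succ_apply']
      exact (hZ _ (ih g hg)).1
  -- key step lemma
  have keyC : ∀ (N : ℕ) (g : Lp → ℂ), DAp g → ∀ z : Lp,
      Z^[N] g z = g pt0 * p N z + Z^[N + 1] (dxp g) z := by
    intro N
    induction N with
    | zero =>
      intro g hg z
      have hdg : DAp (dxp g) := dap_dxp hg
      have hZdg := hZ _ hdg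
      set h : Lp → ℂ := fun w => g w - (g pt0 * p 0 w + Z (dxp g) w) with hdef
      have hhda : DAp h := by
        intro w
        have h1 := hg w
        have h2 := (hpa 0) w
        have h3 := hZdg.1 w
        simp only [hdef]
        linear_combination h1 - g pt0 * h2 - h3
      have hh0 : h pt0 = 0 := by
        simp only [hdef, hp0 pt0, hZdg.2.1]
        ring
      have hhd : dxp h = 0 := by
        funext w
        have h4 := congrFun hZdg.2.2 w
        simp only [dxp, Pi.zero_apply] at h4 ⊢
        simp only [hdef, hp0 (shx w), hp0 w]
        linear_combination -h4
      have := dap_unique hhda hh0 hhd z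
      simp only [hdef] at this
      show g z = g pt0 * p 0 z + Z (dxp g) z
      linear_combination this
    | succ N ih =>
      intro g hg z
      have hdg : DAp (dxp g) := dap_dxp hg
      set h : Lp → ℂ := fun w =>
        Z^[N + 1] g w - (g pt0 * p (N + 1) w + Z^[N + 1 + 1] (dxp g) w) with hdef
      have e1 : Z^[N + 1] g = Z (Z^[N] g) := Function.iterate_succ_apply' Z N g
      have e2 : Z^[N + 1 + 1] (dxp g) = Z (Z^[N + 1] (dxp g)) :=
        Function.iterate_succ_apply' Z (N + 1) (dxp g)
      have hZ1 := hZ _ (dapZ N g hg)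
      have hZ2 := hZ _ (dapZ (N + 1) (dxp g) hdg)
      have hhda : DAp h := by
        intro w
        have h1 : DAp (Z^[N + 1] g) := dapZ (N + 1) g hg
        have h2 := (hpa (N + 1)) w
        have h3 : DAp (Z^[N + 1 + 1] (dxp g)) := dapZ (N + 2) (dxp g) hdg
        simp only [hdef]
        linear_combination h1 w - g pt0 * h2 - h3 w
      have hh0 : h pt0 = 0 := by
        simp only [hdef, e1, e2, hZ1.2.1, hZ2.2.1, hpz N]
        ring
      have hhd : dxp h = 0 := by
        funext w
        have h4 := congrFun hZ1.2.2 w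
        have h5 := congrFun hZ2.2.2 w
        have h6 := congrFun (hpd N) w
        simp only [dxp] at h4 h5 h6
        simp only [dxp, Pi.zero_apply, hdef, e1, e2]
        have h7 := ih g hg w
        linear_combination h4 - g pt0 * h6 - h5 + h7
      have := dap_unique hhda hh0 hhd z
      simp only [hdef] at this
      linear_combination this
  -- main identity
  have main : ∀ (N : ℕ) (z : Lp),
      f z = ∑ n ∈ Finset.range N, (dxp^[n] f) pt0 * p n z
        + (Z^[N] (dxp^[N] f)) z := by
    intro N z
    induction N with
    | zero => simp
    | succ N ih =>
      rw [Finset.sum_range_succ, ih]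
      have e : dxp^[N + 1] f = dxp (dxp^[N] f) :=
        Function.iterate_succ_apply' dxp N f
      have := keyC N (dxp^[N] f) (dapdx N f hf) z
      rw [e]
      linear_combination this
  refine ⟨main, ?_, ?_⟩
  · intro H z
    have h1 := (H z).const_sub (f z)
    have e : (fun N => (Z^[N] (dxp^[N] f)) z)
        = fun N => f z - ∑ n ∈ Finset.range N, (dxp^[n] f) pt0 * p n z := by
      funext N
      rw [main N z]
      ring
    rw [e]
    simpa using h1
  · intro H z
    have h1 := (H z).const_sub (f z)
    have e : (fun N => ∑ n ∈ Finset.range N, (dxp^[n] f) pt0 * p n z)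
        = fun N => f z - (Z^[N] (dxp^[N] f)) z := by
      funext N
      rw [main N z]
      ring
    rw [e]
    simpa using h1
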